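/- (Weak law of large numbers for the Kac chain) For every T ∈ ℕ and δ > 0, μ_m( ⋃_{t=0}^{T} ⋃_{i∈{0,1}} { (x,y) : |m_i^N(φ^t(x,y)) − Φ_i^t(m)| > δ } ) → 0 as N → ∞, where Φ(m) = ((1−2m₁)m₀, m₁). -/

import Mathlib

open MeasureTheory ProbabilityTheory Filter

/-- The Kac chain dynamics. -/
def kacPhi (p : (ℤ → ℤ) × (ℤ → ℤ)) : (ℤ → ℤ) × (ℤ → ℤ) :=
  (fun i => p.1 (i - 1) + p.2 (i - 1) - 2 * p.1 (i - 1) * p.2 (i - 1), p.2)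

/-- Block-averaged magnetization. -/
noncomputable def m0Avg (N : ℕ) (p : (ℤ → ℤ) × (ℤ → ℤ)) : ℝ :=
  (∑ i ∈ Finset.Icc (-(N : ℤ)) (N : ℤ), (2 * (p.1 i : ℝ) - 1)) / (2 * (N : ℝ) + 1)

/-- Block-averaged scatterer density. -/
noncomputable def m1Avg (N : ℕ) (p : (ℤ → ℤ) × (ℤ → ℤ)) : ℝ :=
  (∑ i ∈ Finset.Icc (-(N : ℤ)) (N : ℤ), (p.2 i : ℝ)) / (2 * (N : ℝ) + 1)

/-- The macroscopic law `Φ(m₀, m₁) = ((1−2m₁)m₀, m₁)`. -/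
def PhiMap (m : ℝ × ℝ) : ℝ × ℝ := ((1 - 2 * m.2) * m.1, m.2)

/-- The family of all coordinate functions (spins and scatterers). -/
def coordFun : ℤ ⊕ ℤ → ((ℤ → ℤ) × (ℤ → ℤ)) → ℤ :=
  Sum.elim (fun i p => p.1 i) (fun i p => p.2 i)

section Aux
set_option linter.unusedSectionVars false

variable {Ω : Type*} [MeasurableSpace Ω]


lemma myIntegrable (μ : Measure Ω) [IsProbabilityMeasure μ] {f : Ω → ℝ}
    (hm : Measurable f) {C : ℝ} (hb : ∀ ω, |f ω| ≤ C) : Integrable f μ :=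
  (integrable_const C).mono' hm.aestronglyMeasurable
    (ae_of_all _ (by simpa [Real.norm_eq_abs] using hb))

lemma myIntegral_ite (μ : Measure Ω) [IsProbabilityMeasure μ] (P : Ω → Prop)
    [DecidablePred P] (hA : MeasurableSet {p | P p}) (a b : ℝ) :
    ∫ p, (if P p then a else b) ∂μ = b + (a - b) * (μ {p | P p}).toReal := by
  have h1 : (fun p => if P p then a else b)
      = fun p => b + (a - b) * Set.indicator {p | P p} (fun _ => (1:ℝ)) p := by
    funext p
    by_cases h : P p <;> simp [h, Set.indicator_apply, Set.mem_setOf_eq]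
  rw [h1]
  rw [integral_add (integrable_const b)
      (((integrable_const (1:ℝ)).indicator hA).const_mul _)]
  rw [integral_const_mul, integral_indicator_const _ hA]
  simp [mul_comm, Measure.real]

lemma myIntegral_prod {ι : Type*} (μ : Measure Ω) [IsProbabilityMeasure μ]
    {X : ι → Ω → ℝ}
    (h : iIndepFun X μ)
    (hm : ∀ κ, Measurable (X κ)) (hb : ∀ κ ω, |X κ ω| ≤ 1) (s : Finset ι) :
    ∫ ω, ∏ κ ∈ s, X κ ω ∂μ = ∏ κ ∈ s, ∫ ω, X κ ω ∂μ := by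
  have hbprod : ∀ (t : Finset ι) ω, |∏ κ ∈ t, X κ ω| ≤ 1 := by
    intro t ω
    rw [Finset.abs_prod]
    exact Finset.prod_le_one (fun κ _ => abs_nonneg _) (fun κ _ => hb κ ω)
  have hint : ∀ (t : Finset ι), Integrable (fun ω => ∏ κ ∈ t, X κ ω) μ := by
    intro t
    exact myIntegrable μ (by exact Finset.measurable_prod _ (fun κ _ => hm κ)) (hbprod t)
  induction s using Finset.cons_induction with
  | empty => simp
  | cons i s hi ih =>
    have hindep : IndepFun (∏ j ∈ s, X j) (X i) μ :=
      h.indepFun_finsetProd_of_notMem hm hi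
    have hset : (∏ j ∈ s, X j) = fun ω => ∏ κ ∈ s, X κ ω := by
      funext ω; simp
    rw [hset] at hindep
    have hmul := IndepFun.integral_mul_eq_mul_integral hindep (hint s).aestronglyMeasurable
      (myIntegrable μ (hm i) (hb i)).aestronglyMeasurable
    simp only [Finset.prod_cons, ← ih]
    have h2 : ∫ ω, X i ω * ∏ κ ∈ s, X κ ω ∂μ
        = ∫ ω, ((fun ω => ∏ κ ∈ s, X κ ω) * X i) ω ∂μ := by
      congr 1; funext ω; simp [mul_comm]
    rw [h2, hmul, mul_comm]

lemma myCheb (μ : Measure Ω) [IsProbabilityMeasure μ]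
    (Y : ℤ → Ω → ℝ) (c : ℝ) (L : ℕ) (hL : 1 ≤ L)
    (hm : ∀ i, Measurable (Y i)) (hb : ∀ i ω, |Y i ω| ≤ 1)
    (hmean : ∀ i, ∫ ω, Y i ω ∂μ = c)
    (hcov : ∀ i j : ℤ, (L : ℤ) ≤ |i - j| → ∫ ω, Y i ω * Y j ω ∂μ = c * c)
    (δ : ℝ) (hδ : 0 < δ) :
    Tendsto (fun N : ℕ =>
      μ {ω | |(∑ i ∈ Finset.Icc (-(N : ℤ)) (N : ℤ), Y i ω) / (2 * (N : ℝ) + 1) - c| > δ})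
      atTop (nhds 0) := by
  have hc : |c| ≤ 1 := by
    rw [← hmean 0]
    calc |∫ ω, Y 0 ω ∂μ| ≤ ∫ ω, |Y 0 ω| ∂μ := by
          simpa [Real.norm_eq_abs] using norm_integral_le_integral_norm (μ := μ) (Y 0)
      _ ≤ ∫ ω, (1:ℝ) ∂μ := integral_mono
          ((myIntegrable μ (hm 0) (hb 0)).abs) (integrable_const 1)
          (fun ω => hb 0 ω)
      _ = 1 := by simp
  set D : ℤ → Ω → ℝ := fun i ω => Y i ω - c with hD
  have hmD : ∀ i, Measurable (D i) := fun i => (hm i).sub measurable_const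
  have hbD : ∀ i ω, |D i ω| ≤ 2 := by
    intro i ω
    calc |Y i ω - c| ≤ |Y i ω| + |c| := abs_sub _ _
      _ ≤ 2 := by linarith [hb i ω]
  have hintDD : ∀ i j, Integrable (fun ω => D i ω * D j ω) μ := by
    intro i j
    refine myIntegrable μ ((hmD i).mul (hmD j)) (C := 4) (fun ω => ?_)
    rw [abs_mul]
    calc |D i ω| * |D j ω| ≤ 2 * 2 := by
          exact mul_le_mul (hbD i ω) (hbD j ω) (abs_nonneg _) (by norm_num)
      _ = 4 := by norm_num
  -- integral of D i * D j
  have hintY : ∀ i, Integrable (Y i) μ := fun i => myIntegrable μ (hm i) (hb i)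
  have hintYY : ∀ i j, Integrable (fun ω => Y i ω * Y j ω) μ := by
    intro i j
    refine myIntegrable μ ((hm i).mul (hm j)) (C := 1) (fun ω => ?_)
    rw [abs_mul]
    exact mul_le_one₀ (hb i ω) (abs_nonneg _) (hb j ω)
  have hDD : ∀ i j, ∫ ω, D i ω * D j ω ∂μ = (∫ ω, Y i ω * Y j ω ∂μ) - c * c := by
    intro i j
    have he : (fun ω => D i ω * D j ω)
        = fun ω => (Y i ω * Y j ω - c * Y i ω) - (c * Y j ω - c * c) := by
      funext ω; simp only [hD]; ring
    have h1 : Integrable (fun ω => Y i ω * Y j ω - c * Y i ω) μ :=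
      (hintYY i j).sub ((hintY i).const_mul c)
    have h2 : Integrable (fun ω => c * Y j ω - c * c) μ :=
      ((hintY j).const_mul c).sub (integrable_const _)
    rw [he, integral_sub h1 h2,
      integral_sub (hintYY i j) ((hintY i).const_mul c),
      integral_sub ((hintY j).const_mul c) (integrable_const _),
      integral_const_mul, integral_const_mul, hmean i, hmean j, integral_const]
    simp
  have hDD0 : ∀ i j : ℤ, (L : ℤ) ≤ |i - j| → ∫ ω, D i ω * D j ω ∂μ = 0 := by
    intro i j hij; rw [hDD, hcov i j hij]; ring
  have hDD4 : ∀ i j : ℤ, ∫ ω, D i ω * D j ω ∂μ ≤ 4 := by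
    intro i j
    rw [hDD]
    have : ∫ ω, Y i ω * Y j ω ∂μ ≤ 1 := by
      calc ∫ ω, Y i ω * Y j ω ∂μ ≤ ∫ ω, (1:ℝ) ∂μ := by
            refine integral_mono (hintYY i j) (integrable_const 1) (fun ω => ?_)
            calc Y i ω * Y j ω ≤ |Y i ω * Y j ω| := le_abs_self _
              _ ≤ 1 := by rw [abs_mul]; exact mul_le_one₀ (hb i ω) (abs_nonneg _) (hb j ω)
        _ = 1 := by simp
    nlinarith
  set K : ℝ := 4 * (2 * (L : ℝ) + 1) with hK
  have hKpos : 0 < K := by positivity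
  -- the per-N bound
  have hbound : ∀ N : ℕ,
      μ {ω | |(∑ i ∈ Finset.Icc (-(N : ℤ)) (N : ℤ), Y i ω) / (2 * (N : ℝ) + 1) - c| > δ}
        ≤ ENNReal.ofReal ((K / δ ^ 2) * (2 * (N : ℝ) + 1)⁻¹) := by
    intro N
    set I : Finset ℤ := Finset.Icc (-(N : ℤ)) (N : ℤ) with hI
    set n : ℝ := 2 * (N : ℝ) + 1 with hn
    have hnpos : 0 < n := by positivity
    have hcardI : (I.card : ℝ) = n := by
      have : I.card = 2 * N + 1 := by
        rw [hI, Int.card_Icc]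
        omega
      rw [this]; push_cast [hn]; ring
    set S : Ω → ℝ := fun ω => ∑ i ∈ I, D i ω with hS
    have hSsq : ∀ ω, S ω ^ 2 = ∑ i ∈ I, ∑ j ∈ I, D i ω * D j ω := by
      intro ω
      rw [pow_two, hS, Finset.sum_mul_sum]
    have hintf : Integrable (fun ω => S ω ^ 2) μ := by
      have : (fun ω => S ω ^ 2) = fun ω => ∑ i ∈ I, ∑ j ∈ I, D i ω * D j ω := by
        funext ω; exact hSsq ω
      rw [this]
      exact integrable_finset_sum _ (fun i _ =>
        integrable_finset_sum _ (fun j _ => hintDD i j))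
    have hIf : ∫ ω, S ω ^ 2 ∂μ ≤ n * K := by
      have h1 : ∫ ω, S ω ^ 2 ∂μ = ∑ i ∈ I, ∑ j ∈ I, ∫ ω, D i ω * D j ω ∂μ := by
        simp_rw [hSsq]
        rw [integral_finset_sum _ (fun i _ =>
          integrable_finset_sum _ (fun j _ => hintDD i j))]
        exact Finset.sum_congr rfl (fun i _ =>
          integral_finset_sum _ (fun j _ => hintDD i j))
      rw [h1]
      have h2 : ∀ i ∈ I, ∑ j ∈ I, ∫ ω, D i ω * D j ω ∂μ ≤ K := by
        intro i _
        have h3 : ∑ j ∈ I, ∫ ω, D i ω * D j ω ∂μ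
            ≤ ∑ j ∈ I, (if |i - j| < (L : ℤ) then (4:ℝ) else 0) := by
          refine Finset.sum_le_sum (fun j _ => ?_)
          by_cases hij : |i - j| < (L : ℤ)
          · simpa [hij] using hDD4 i j
          · rw [if_neg hij, hDD0 i j (not_lt.mp hij)]
        refine h3.trans ?_
        rw [← Finset.sum_filter, Finset.sum_const, nsmul_eq_mul]
        have h4 : (I.filter (fun j => |i - j| < (L : ℤ))) ⊆ Finset.Icc (i - L) (i + L) := by
          intro j hj
          simp only [Finset.mem_filter] at hj
          have := hj.2
          rw [abs_lt] at this
          simp only [Finset.mem_Icc]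
          omega
        have h5 : (I.filter (fun j => |i - j| < (L : ℤ))).card ≤ 2 * L + 1 := by
          refine (Finset.card_le_card h4).trans ?_
          rw [Int.card_Icc]
          omega
        have h6 : ((I.filter (fun j => |i - j| < (L : ℤ))).card : ℝ) ≤ 2 * (L : ℝ) + 1 := by
          exact_mod_cast h5
        calc ((I.filter (fun j => |i - j| < (L : ℤ))).card : ℝ) * 4
            ≤ (2 * (L : ℝ) + 1) * 4 := by nlinarith
          _ = K := by rw [hK]; ring
      calc ∑ i ∈ I, ∑ j ∈ I, ∫ ω, D i ω * D j ω ∂μ ≤ ∑ i ∈ I, K :=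
            Finset.sum_le_sum h2
        _ = (I.card : ℝ) * K := by rw [Finset.sum_const, nsmul_eq_mul]
        _ = n * K := by rw [hcardI]
    -- Markov
    have hsub : {ω | |(∑ i ∈ I, Y i ω) / n - c| > δ} ⊆ {ω | (δ * n) ^ 2 ≤ S ω ^ 2} := by
      intro ω hω
      simp only [Set.mem_setOf_eq] at hω ⊢
      have hSω : S ω = (∑ i ∈ I, Y i ω) - n * c := by
        rw [hS]
        simp only [hD]
        rw [Finset.sum_sub_distrib, Finset.sum_const, nsmul_eq_mul, hcardI]
      have havg : (∑ i ∈ I, Y i ω) / n - c = S ω / n := by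
        rw [hSω]; field_simp
      rw [havg] at hω
      have h7 : δ * n < |S ω| := by
        have : |S ω / n| = |S ω| / n := by
          rw [abs_div, abs_of_pos hnpos]
        rw [this] at hω
        calc δ * n < (|S ω| / n) * n := by
              exact mul_lt_mul_of_pos_right hω hnpos
          _ = |S ω| := by field_simp
      calc (δ * n) ^ 2 ≤ |S ω| ^ 2 := by
            refine pow_le_pow_left₀ (by positivity) h7.le 2
        _ = S ω ^ 2 := sq_abs _
    have hmark := mul_meas_ge_le_integral_of_nonneg (μ := μ)
      (f := fun ω => S ω ^ 2) (ae_of_all _ fun ω => sq_nonneg _) hintf ((δ * n) ^ 2)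
    have hεpos : (0:ℝ) < (δ * n) ^ 2 := by positivity
    have h8 : (μ {ω | |(∑ i ∈ I, Y i ω) / n - c| > δ}).toReal
        ≤ (n * K) / (δ * n) ^ 2 := by
      have h9 : (μ {ω | |(∑ i ∈ I, Y i ω) / n - c| > δ}).toReal
          ≤ (μ {ω | (δ * n) ^ 2 ≤ S ω ^ 2}).toReal :=
        ENNReal.toReal_mono (measure_ne_top μ _) (measure_mono hsub)
      have h10 : (μ {ω | (δ * n) ^ 2 ≤ S ω ^ 2}).toReal ≤ (n * K) / (δ * n) ^ 2 := by
        rw [le_div_iff₀ hεpos]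
        calc (μ {ω | (δ * n) ^ 2 ≤ S ω ^ 2}).toReal * (δ * n) ^ 2
            = (δ * n) ^ 2 * (μ {ω | (δ * n) ^ 2 ≤ S ω ^ 2}).toReal := by ring
          _ ≤ ∫ ω, S ω ^ 2 ∂μ := hmark
          _ ≤ n * K := hIf
      exact h9.trans h10
    have h11 : (n * K) / (δ * n) ^ 2 = (K / δ ^ 2) * n⁻¹ := by
      field_simp
    calc μ {ω | |(∑ i ∈ I, Y i ω) / n - c| > δ}
        = ENNReal.ofReal ((μ {ω | |(∑ i ∈ I, Y i ω) / n - c| > δ}).toReal) :=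
          (ENNReal.ofReal_toReal (measure_ne_top μ _)).symm
      _ ≤ ENNReal.ofReal ((K / δ ^ 2) * n⁻¹) := by
          rw [← h11]; exact ENNReal.ofReal_le_ofReal h8
  -- squeeze
  have htend : Tendsto (fun N : ℕ => ENNReal.ofReal ((K / δ ^ 2) * (2 * (N : ℝ) + 1)⁻¹))
      atTop (nhds 0) := by
    have h12 : Tendsto (fun N : ℕ => (K / δ ^ 2) * (2 * (N : ℝ) + 1)⁻¹) atTop (nhds 0) := by
      have h13 : Tendsto (fun N : ℕ => 2 * (N : ℝ) + 1) atTop atTop := by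
        apply Filter.tendsto_atTop_add_const_right
        exact (tendsto_natCast_atTop_atTop (R := ℝ)).const_mul_atTop (by norm_num)
      have h14 : Tendsto (fun N : ℕ => (2 * (N : ℝ) + 1)⁻¹) atTop (nhds 0) :=
        h13.inv_tendsto_atTop
      simpa using h14.const_mul (K / δ ^ 2)
    have := (ENNReal.continuous_ofReal.tendsto 0).comp h12
    rwa [ENNReal.ofReal_zero] at this
  exact tendsto_of_tendsto_of_tendsto_of_le_of_le tendsto_const_nhds htend
    (fun N => zero_le) hbound





lemma kacPhi_snd (t : ℕ) (p : (ℤ → ℤ) × (ℤ → ℤ)) : (kacPhi^[t] p).2 = p.2 := by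
  induction t with
  | zero => rfl
  | succ t ih => rw [Function.iterate_succ_apply']; exact ih

lemma kacPhi_spin (t : ℕ) (p : (ℤ → ℤ) × (ℤ → ℤ)) (i : ℤ) :
    2 * (kacPhi^[t] p).1 i - 1 =
      (2 * p.1 (i - t) - 1) * ∏ k ∈ Finset.range t, (1 - 2 * p.2 (i - 1 - k)) := by
  induction t generalizing i with
  | zero => simp
  | succ t ih =>
    rw [Function.iterate_succ_apply']
    have h1 : (kacPhi (kacPhi^[t] p)).1 i
        = (kacPhi^[t] p).1 (i - 1) + (kacPhi^[t] p).2 (i - 1)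
          - 2 * (kacPhi^[t] p).1 (i - 1) * (kacPhi^[t] p).2 (i - 1) := rfl
    rw [h1, kacPhi_snd]
    have h2 : 2 * ((kacPhi^[t] p).1 (i - 1) + p.2 (i - 1)
        - 2 * (kacPhi^[t] p).1 (i - 1) * p.2 (i - 1)) - 1
        = (2 * (kacPhi^[t] p).1 (i - 1) - 1) * (1 - 2 * p.2 (i - 1)) := by ring
    rw [h2, ih (i - 1)]
    rw [Finset.prod_range_succ']
    have h3 : ∀ k : ℕ, i - 1 - 1 - (k : ℤ) = i - 1 - ((k : ℕ) + 1 : ℕ) := by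
      intro k; push_cast; ring
    have h4 : i - 1 - (t : ℤ) = i - ((t : ℕ) + 1 : ℕ) := by push_cast; ring
    rw [h4]
    have h5 : ∏ k ∈ Finset.range t, (1 - 2 * p.2 (i - 1 - 1 - k))
        = ∏ k ∈ Finset.range t, (1 - 2 * p.2 (i - 1 - ((k : ℕ) + 1 : ℕ))) := by
      refine Finset.prod_congr rfl (fun k _ => ?_)
      rw [h3 k]
    rw [h5]
    ring_nf

lemma phiMap_iter (m₀ m₁ : ℝ) (t : ℕ) :
    PhiMap^[t] (m₀, m₁) = ((1 - 2 * m₁) ^ t * m₀, m₁) := by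
  induction t with
  | zero => simp
  | succ t ih =>
    rw [Function.iterate_succ_apply', ih]
    simp only [PhiMap]
    rw [Prod.mk.injEq]
    refine ⟨by ring, rfl⟩

noncomputable def g1 : ℤ → ℝ := fun x => if x = 1 then 1 else -1
noncomputable def g2 : ℤ → ℝ := fun y => if y = 1 then -1 else 1
noncomputable def h1 : ℤ → ℝ := fun y => if y = 1 then 1 else 0

lemma g1_abs (x : ℤ) : |g1 x| ≤ 1 := by unfold g1; split <;> norm_num
lemma g2_abs (x : ℤ) : |g2 x| ≤ 1 := by unfold g2; split <;> norm_num
lemma h1_abs (x : ℤ) : |h1 x| ≤ 1 := by unfold h1; split <;> norm_num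

lemma meas_coord (κ : ℤ ⊕ ℤ) : Measurable (coordFun κ) := by
  rcases κ with i | i
  · exact (measurable_pi_apply i).comp measurable_fst
  · exact (measurable_pi_apply i).comp measurable_snd

/-- spin factor family -/
noncomputable def gSpin : ℤ ⊕ ℤ → ℤ → ℝ := Sum.elim (fun _ => g1) (fun _ => g2)
noncomputable def gScat : ℤ ⊕ ℤ → ℤ → ℝ := Sum.elim (fun _ => g1) (fun _ => h1)

noncomputable def Fm0 : ℤ ⊕ ℤ → ((ℤ → ℤ) × (ℤ → ℤ)) → ℝ :=
  fun κ => gSpin κ ∘ coordFun κ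
noncomputable def Fm1 : ℤ ⊕ ℤ → ((ℤ → ℤ) × (ℤ → ℤ)) → ℝ :=
  fun κ => gScat κ ∘ coordFun κ

lemma meas_Fm0 (κ : ℤ ⊕ ℤ) : Measurable (Fm0 κ) :=
  (measurable_from_top (f := gSpin κ)).comp (meas_coord κ)
lemma meas_Fm1 (κ : ℤ ⊕ ℤ) : Measurable (Fm1 κ) :=
  (measurable_from_top (f := gScat κ)).comp (meas_coord κ)

lemma abs_Fm0 (κ : ℤ ⊕ ℤ) (p : (ℤ → ℤ) × (ℤ → ℤ)) : |Fm0 κ p| ≤ 1 := by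
  rcases κ with i | i
  · exact g1_abs _
  · exact g2_abs _
lemma abs_Fm1 (κ : ℤ ⊕ ℤ) (p : (ℤ → ℤ) × (ℤ → ℤ)) : |Fm1 κ p| ≤ 1 := by
  rcases κ with i | i
  · exact g1_abs _
  · exact h1_abs _

/-- the index set of factors for the magnetization variable -/
def idxSet (t : ℕ) (i : ℤ) : Finset (ℤ ⊕ ℤ) :=
  insert (Sum.inl (i - t)) ((Finset.range t).image (fun k : ℕ => Sum.inr (i - 1 - (k : ℤ))))

noncomputable def Wm0 (t : ℕ) (i : ℤ) (p : (ℤ → ℤ) × (ℤ → ℤ)) : ℝ :=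
  g1 (p.1 (i - t)) * ∏ k ∈ Finset.range t, g2 (p.2 (i - 1 - k))

lemma mem_idxSet {t : ℕ} {i : ℤ} {κ : ℤ ⊕ ℤ} :
    κ ∈ idxSet t i ↔ κ = Sum.inl (i - t) ∨ ∃ k : ℕ, k < t ∧ κ = Sum.inr (i - 1 - k) := by
  simp only [idxSet, Finset.mem_insert, Finset.mem_image, Finset.mem_range]
  constructor
  · rintro (h | ⟨k, hk, rfl⟩)
    · exact Or.inl h
    · exact Or.inr ⟨k, hk, rfl⟩
  · rintro (h | ⟨k, hk, rfl⟩)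
    · exact Or.inl h
    · exact Or.inr ⟨k, hk, rfl⟩

lemma Wm0_eq_prod (t : ℕ) (i : ℤ) (p : (ℤ → ℤ) × (ℤ → ℤ)) :
    Wm0 t i p = ∏ κ ∈ idxSet t i, Fm0 κ p := by
  rw [idxSet, Finset.prod_insert (by simp), Finset.prod_image (by
    intro a _ b _ h
    simpa using h)]
  rfl

lemma idxSet_disj {t : ℕ} {i j : ℤ} (hL : ((max t 1 : ℕ) : ℤ) ≤ |i - j|) :
    Disjoint (idxSet t i) (idxSet t j) := by
  have h1 : (1 : ℤ) ≤ |i - j| := le_trans (by exact_mod_cast le_max_right t 1) hL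
  have ht : (t : ℤ) ≤ |i - j| := le_trans (by exact_mod_cast le_max_left t 1) hL
  rw [Finset.disjoint_left]
  intro κ hκi hκj
  rw [mem_idxSet] at hκi hκj
  rcases hκi with rfl | ⟨k, hk, rfl⟩
  · rcases hκj with h' | ⟨k', hk', h'⟩
    · have h2 := Sum.inl.inj h'
      rcases abs_cases (i - j) with ⟨he, _⟩ | ⟨he, _⟩ <;> omega
    · exact absurd h' (by simp)
  · rcases hκj with h' | ⟨k', hk', h'⟩
    · exact absurd h' (by simp)
    · have h2 := Sum.inr.inj h'
      rcases abs_cases (i - j) with ⟨he, _⟩ | ⟨he, _⟩ <;> omega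

section KacMeasure

variable {m₀ m₁ : ℝ} (μ : Measure ((ℤ → ℤ) × (ℤ → ℤ))) [IsProbabilityMeasure μ]

lemma measSet_fst (j : ℤ) (v : ℤ) : MeasurableSet {p : (ℤ → ℤ) × (ℤ → ℤ) | p.1 j = v} := by
  have hm : Measurable (fun p : (ℤ → ℤ) × (ℤ → ℤ) => p.1 j) :=
    (measurable_pi_apply j).comp measurable_fst
  exact hm (measurableSet_singleton v)

lemma measSet_snd (j : ℤ) (v : ℤ) : MeasurableSet {p : (ℤ → ℤ) × (ℤ → ℤ) | p.2 j = v} := by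
  have hm : Measurable (fun p : (ℤ → ℤ) × (ℤ → ℤ) => p.2 j) :=
    (measurable_pi_apply j).comp measurable_snd
  exact hm (measurableSet_singleton v)

lemma int_g1 (hm₀ : m₀ ∈ Set.Icc (-1 : ℝ) 1)
    (hx1 : ∀ i : ℤ, μ {p | p.1 i = 1} = ENNReal.ofReal ((1 + m₀) / 2)) (j : ℤ) :
    ∫ p, g1 (p.1 j) ∂μ = m₀ := by
  have h := myIntegral_ite μ (fun p : (ℤ → ℤ) × (ℤ → ℤ) => p.1 j = 1)
    (measSet_fst j 1) 1 (-1)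
  simp only [g1]
  rw [h, hx1 j, ENNReal.toReal_ofReal (by linarith [hm₀.1])]
  ring

lemma int_g2 (hm₁ : m₁ ∈ Set.Icc (0 : ℝ) 1)
    (hy1 : ∀ i : ℤ, μ {p | p.2 i = 1} = ENNReal.ofReal m₁) (j : ℤ) :
    ∫ p, g2 (p.2 j) ∂μ = 1 - 2 * m₁ := by
  have h := myIntegral_ite μ (fun p : (ℤ → ℤ) × (ℤ → ℤ) => p.2 j = 1)
    (measSet_snd j 1) (-1) 1
  simp only [g2]
  rw [h, hy1 j, ENNReal.toReal_ofReal hm₁.1]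
  ring

lemma int_h1 (hm₁ : m₁ ∈ Set.Icc (0 : ℝ) 1)
    (hy1 : ∀ i : ℤ, μ {p | p.2 i = 1} = ENNReal.ofReal m₁) (j : ℤ) :
    ∫ p, h1 (p.2 j) ∂μ = m₁ := by
  have h := myIntegral_ite μ (fun p : (ℤ → ℤ) × (ℤ → ℤ) => p.2 j = 1)
    (measSet_snd j 1) 1 0
  simp only [h1]
  rw [h, hy1 j, ENNReal.toReal_ofReal hm₁.1]
  ring

end KacMeasure

section KacMoments

variable {m₀ m₁ : ℝ} {μ : Measure ((ℤ → ℤ) × (ℤ → ℤ))} [IsProbabilityMeasure μ]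

lemma hFm0_indep
    (hind : iIndepFun coordFun μ) :
    iIndepFun Fm0 μ :=
  hind.comp gSpin (fun _ => measurable_from_top)

lemma hFm1_indep
    (hind : iIndepFun coordFun μ) :
    iIndepFun Fm1 μ :=
  hind.comp gScat (fun _ => measurable_from_top)

lemma prodInt_Fm0 (hm₀ : m₀ ∈ Set.Icc (-1 : ℝ) 1) (hm₁ : m₁ ∈ Set.Icc (0 : ℝ) 1)
    (hx1 : ∀ i : ℤ, μ {p | p.1 i = 1} = ENNReal.ofReal ((1 + m₀) / 2))
    (hy1 : ∀ i : ℤ, μ {p | p.2 i = 1} = ENNReal.ofReal m₁) (t : ℕ) (i : ℤ) :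
    ∏ κ ∈ idxSet t i, ∫ p, Fm0 κ p ∂μ = (1 - 2 * m₁) ^ t * m₀ := by
  rw [idxSet, Finset.prod_insert (by simp), Finset.prod_image (by
    intro a _ b _ h
    simpa using h)]
  have h1 : ∫ p, Fm0 (Sum.inl (i - (t : ℤ))) p ∂μ = m₀ := int_g1 μ hm₀ hx1 _
  have h2 : ∀ k : ℕ, ∫ p, Fm0 (Sum.inr (i - 1 - (k : ℤ))) p ∂μ = 1 - 2 * m₁ :=
    fun k => int_g2 μ hm₁ hy1 _
  rw [h1]
  rw [Finset.prod_congr rfl (fun k _ => h2 k), Finset.prod_const, Finset.card_range]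
  ring

lemma mean_Wm0 (hm₀ : m₀ ∈ Set.Icc (-1 : ℝ) 1) (hm₁ : m₁ ∈ Set.Icc (0 : ℝ) 1)
    (hind : iIndepFun coordFun μ)
    (hx1 : ∀ i : ℤ, μ {p | p.1 i = 1} = ENNReal.ofReal ((1 + m₀) / 2))
    (hy1 : ∀ i : ℤ, μ {p | p.2 i = 1} = ENNReal.ofReal m₁) (t : ℕ) (i : ℤ) :
    ∫ p, Wm0 t i p ∂μ = (1 - 2 * m₁) ^ t * m₀ := by
  have h0 : (fun p => Wm0 t i p) = fun p => ∏ κ ∈ idxSet t i, Fm0 κ p := by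
    funext p; exact Wm0_eq_prod t i p
  rw [h0, myIntegral_prod μ (hFm0_indep hind) meas_Fm0 abs_Fm0,
    prodInt_Fm0 hm₀ hm₁ hx1 hy1]

lemma cov_Wm0 (hm₀ : m₀ ∈ Set.Icc (-1 : ℝ) 1) (hm₁ : m₁ ∈ Set.Icc (0 : ℝ) 1)
    (hind : iIndepFun coordFun μ)
    (hx1 : ∀ i : ℤ, μ {p | p.1 i = 1} = ENNReal.ofReal ((1 + m₀) / 2))
    (hy1 : ∀ i : ℤ, μ {p | p.2 i = 1} = ENNReal.ofReal m₁) (t : ℕ) (i j : ℤ)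
    (hL : ((max t 1 : ℕ) : ℤ) ≤ |i - j|) :
    ∫ p, Wm0 t i p * Wm0 t j p ∂μ
      = ((1 - 2 * m₁) ^ t * m₀) * ((1 - 2 * m₁) ^ t * m₀) := by
  have hdisj := idxSet_disj hL
  have h0 : (fun p => Wm0 t i p * Wm0 t j p)
      = fun p => ∏ κ ∈ idxSet t i ∪ idxSet t j, Fm0 κ p := by
    funext p
    rw [Finset.prod_union hdisj, Wm0_eq_prod, Wm0_eq_prod]
  rw [h0, myIntegral_prod μ (hFm0_indep hind) meas_Fm0 abs_Fm0,
    Finset.prod_union hdisj, prodInt_Fm0 hm₀ hm₁ hx1 hy1, prodInt_Fm0 hm₀ hm₁ hx1 hy1]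

lemma cov_Wm1 (hm₁ : m₁ ∈ Set.Icc (0 : ℝ) 1)
    (hind : iIndepFun coordFun μ)
    (hy1 : ∀ i : ℤ, μ {p | p.2 i = 1} = ENNReal.ofReal m₁) (i j : ℤ)
    (hL : ((1 : ℕ) : ℤ) ≤ |i - j|) :
    ∫ p, h1 (p.2 i) * h1 (p.2 j) ∂μ = m₁ * m₁ := by
  have hij : i ≠ j := by
    intro h
    rw [h] at hL
    simp at hL
  have h0 : (fun p : (ℤ → ℤ) × (ℤ → ℤ) => h1 (p.2 i) * h1 (p.2 j))
      = fun p => ∏ κ ∈ ({Sum.inr i, Sum.inr j} : Finset (ℤ ⊕ ℤ)), Fm1 κ p := by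
    funext p
    rw [Finset.prod_pair (by simpa using hij)]
    rfl
  rw [h0, myIntegral_prod μ (hFm1_indep hind) meas_Fm1 abs_Fm1,
    Finset.prod_pair (by simpa using hij)]
  have h2 : ∀ k : ℤ, ∫ p, Fm1 (Sum.inr k) p ∂μ = m₁ := fun k => int_h1 μ hm₁ hy1 k
  rw [h2, h2]

lemma mean_Wm1 (hm₁ : m₁ ∈ Set.Icc (0 : ℝ) 1)
    (hy1 : ∀ i : ℤ, μ {p | p.2 i = 1} = ENNReal.ofReal m₁) (i : ℤ) :
    ∫ p, h1 (p.2 i) ∂μ = m₁ := int_h1 μ hm₁ hy1 i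

end KacMoments

/-- the full-measure set of configurations with 0/1 coordinates -/
def Good : Set ((ℤ → ℤ) × (ℤ → ℤ)) :=
  ⋂ κ : ℤ ⊕ ℤ, {p | coordFun κ p = 0 ∨ coordFun κ p = 1}

lemma good_fst {p : (ℤ → ℤ) × (ℤ → ℤ)} (hp : p ∈ Good) (i : ℤ) :
    p.1 i = 0 ∨ p.1 i = 1 := Set.mem_iInter.mp hp (Sum.inl i)

lemma good_snd {p : (ℤ → ℤ) × (ℤ → ℤ)} (hp : p ∈ Good) (i : ℤ) :
    p.2 i = 0 ∨ p.2 i = 1 := Set.mem_iInter.mp hp (Sum.inr i)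

lemma good_compl_null {m₀ m₁ : ℝ} (μ : Measure ((ℤ → ℤ) × (ℤ → ℤ)))
    [IsProbabilityMeasure μ]
    (hm₀ : m₀ ∈ Set.Icc (-1 : ℝ) 1) (hm₁ : m₁ ∈ Set.Icc (0 : ℝ) 1)
    (hx1 : ∀ i : ℤ, μ {p | p.1 i = 1} = ENNReal.ofReal ((1 + m₀) / 2))
    (hx0 : ∀ i : ℤ, μ {p | p.1 i = 0} = ENNReal.ofReal ((1 - m₀) / 2))
    (hy1 : ∀ i : ℤ, μ {p | p.2 i = 1} = ENNReal.ofReal m₁)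
    (hy0 : ∀ i : ℤ, μ {p | p.2 i = 0} = ENNReal.ofReal (1 - m₁)) :
    μ (Goodᶜ) = 0 := by
  have key : ∀ κ : ℤ ⊕ ℤ, μ ({p | coordFun κ p = 0 ∨ coordFun κ p = 1}ᶜ) = 0 := by
    intro κ
    have hsplit : ∀ (A B : Set ((ℤ → ℤ) × (ℤ → ℤ))), MeasurableSet A → MeasurableSet B →
        Disjoint A B → μ A + μ B = 1 → μ ((A ∪ B)ᶜ) = 0 := by
      intro A B hA hB hAB hsum
      rw [measure_compl (hA.union hB) (measure_ne_top μ _),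
        measure_union hAB hB, hsum]
      simp
    rcases κ with i | i
    · have h0 : {p : (ℤ → ℤ) × (ℤ → ℤ) | coordFun (Sum.inl i) p = 0 ∨ coordFun (Sum.inl i) p = 1}
          = {p | p.1 i = 0} ∪ {p | p.1 i = 1} := rfl
      rw [h0]
      refine hsplit _ _ (measSet_fst i 0) (measSet_fst i 1) ?_ ?_
      · rw [Set.disjoint_left]
        intro p hp0 hp1
        simp only [Set.mem_setOf_eq] at hp0 hp1
        omega
      · rw [hx0 i, hx1 i, ← ENNReal.ofReal_add (by linarith [hm₀.2]) (by linarith [hm₀.1])]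
        have : (1 - m₀) / 2 + (1 + m₀) / 2 = 1 := by ring
        rw [this, ENNReal.ofReal_one]
    · have h0 : {p : (ℤ → ℤ) × (ℤ → ℤ) | coordFun (Sum.inr i) p = 0 ∨ coordFun (Sum.inr i) p = 1}
          = {p | p.2 i = 0} ∪ {p | p.2 i = 1} := rfl
      rw [h0]
      refine hsplit _ _ (measSet_snd i 0) (measSet_snd i 1) ?_ ?_
      · rw [Set.disjoint_left]
        intro p hp0 hp1
        simp only [Set.mem_setOf_eq] at hp0 hp1
        omega
      · rw [hy0 i, hy1 i, ← ENNReal.ofReal_add (by linarith [hm₁.2]) hm₁.1]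
        have : 1 - m₁ + m₁ = 1 := by ring
        rw [this, ENNReal.ofReal_one]
  have hsub : Goodᶜ ⊆ ⋃ κ : ℤ ⊕ ℤ, ({p | coordFun κ p = 0 ∨ coordFun κ p = 1}ᶜ) := by
    rw [Good, Set.compl_iInter]
  refine le_antisymm ?_ zero_le
  calc μ (Goodᶜ) ≤ ∑' κ : ℤ ⊕ ℤ, μ ({p | coordFun κ p = 0 ∨ coordFun κ p = 1}ᶜ) :=
        le_trans (measure_mono hsub) (measure_iUnion_le _)
    _ = 0 := by simp [key]



lemma good_m0 {p : (ℤ → ℤ) × (ℤ → ℤ)} (hp : p ∈ Good) (N : ℕ) (t : ℕ) :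
    m0Avg N (kacPhi^[t] p)
      = (∑ i ∈ Finset.Icc (-(N : ℤ)) (N : ℤ), Wm0 t i p) / (2 * (N : ℝ) + 1) := by
  unfold m0Avg
  congr 1
  refine Finset.sum_congr rfl (fun i _ => ?_)
  have hz := kacPhi_spin t p i
  have hzr := congrArg (fun z : ℤ => (z : ℝ)) hz
  push_cast at hzr
  rw [hzr, Wm0]
  have e1 : 2 * (p.1 (i - (t : ℤ)) : ℝ) - 1 = g1 (p.1 (i - (t : ℤ))) := by
    rcases good_fst hp (i - (t : ℤ)) with h | h <;> rw [h] <;> norm_num [g1]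
  have e2 : ∀ k : ℕ, (1 : ℝ) - 2 * (p.2 (i - 1 - (k : ℤ)) : ℝ) = g2 (p.2 (i - 1 - (k : ℤ))) := by
    intro k
    rcases good_snd hp (i - 1 - (k : ℤ)) with h | h <;> rw [h] <;> norm_num [g2]
  rw [e1]
  congr 1
  exact Finset.prod_congr rfl (fun k _ => e2 k)

lemma good_m1 {p : (ℤ → ℤ) × (ℤ → ℤ)} (hp : p ∈ Good) (N : ℕ) (t : ℕ) :
    m1Avg N (kacPhi^[t] p)
      = (∑ i ∈ Finset.Icc (-(N : ℤ)) (N : ℤ), h1 (p.2 i)) / (2 * (N : ℝ) + 1) := by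
  unfold m1Avg
  rw [kacPhi_snd]
  congr 1
  refine Finset.sum_congr rfl (fun i _ => ?_)
  rcases good_snd hp i with h | h <;> rw [h] <;> norm_num [h1]


end Aux

/-- weak law of large numbers for the Kac chain, for the i.i.d. product
Bernoulli measure with spin mean `m₀` and scatterer density `m₁`. -/
theorem kac_weak_lln (m₀ m₁ : ℝ) (hm₀ : m₀ ∈ Set.Icc (-1 : ℝ) 1)
    (hm₁ : m₁ ∈ Set.Icc (0 : ℝ) 1)
    (μ : Measure ((ℤ → ℤ) × (ℤ → ℤ))) [IsProbabilityMeasure μ]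
    (hind : iIndepFun coordFun μ)
    (hx1 : ∀ i : ℤ, μ {p | p.1 i = 1} = ENNReal.ofReal ((1 + m₀) / 2))
    (hx0 : ∀ i : ℤ, μ {p | p.1 i = 0} = ENNReal.ofReal ((1 - m₀) / 2))
    (hy1 : ∀ i : ℤ, μ {p | p.2 i = 1} = ENNReal.ofReal m₁)
    (hy0 : ∀ i : ℤ, μ {p | p.2 i = 0} = ENNReal.ofReal (1 - m₁))
    (T : ℕ) (δ : ℝ) (hδ : 0 < δ) :
    Tendsto (fun N : ℕ =>
        μ {p | ∃ t ≤ T,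
            |m0Avg N (kacPhi^[t] p) - (PhiMap^[t] (m₀, m₁)).1| > δ ∨
            |m1Avg N (kacPhi^[t] p) - (PhiMap^[t] (m₀, m₁)).2| > δ})
      atTop (nhds 0) := by
  classical
  set A : ℕ → ℕ → Set ((ℤ → ℤ) × (ℤ → ℤ)) := fun t N =>
    {p | |(∑ i ∈ Finset.Icc (-(N : ℤ)) (N : ℤ), Wm0 t i p) / (2 * (N : ℝ) + 1)
      - (1 - 2 * m₁) ^ t * m₀| > δ} with hAdef
  set B : ℕ → Set ((ℤ → ℤ) × (ℤ → ℤ)) := fun N =>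
    {p | |(∑ i ∈ Finset.Icc (-(N : ℤ)) (N : ℤ), h1 (p.2 i)) / (2 * (N : ℝ) + 1)
      - m₁| > δ} with hBdef
  have hAm : ∀ t, Tendsto (fun N => μ (A t N)) atTop (nhds 0) := by
    intro t
    have hmeas : ∀ i : ℤ, Measurable (Wm0 t i) := by
      intro i
      have h0 : Wm0 t i = fun p => ∏ κ ∈ idxSet t i, Fm0 κ p := funext (Wm0_eq_prod t i)
      rw [h0]
      exact Finset.measurable_prod _ (fun κ _ => meas_Fm0 κ)
    have hbd : ∀ (i : ℤ) ω, |Wm0 t i ω| ≤ 1 := by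
      intro i ω
      rw [Wm0_eq_prod, Finset.abs_prod]
      exact Finset.prod_le_one (fun κ _ => abs_nonneg _) (fun κ _ => abs_Fm0 κ ω)
    exact myCheb μ (fun i => Wm0 t i) ((1 - 2 * m₁) ^ t * m₀) (max t 1)
      (le_max_right _ _) hmeas hbd
      (fun i => mean_Wm0 hm₀ hm₁ hind hx1 hy1 t i)
      (fun i j hL => cov_Wm0 hm₀ hm₁ hind hx1 hy1 t i j hL) δ hδ
  have hBm : Tendsto (fun N => μ (B N)) atTop (nhds 0) := by
    have hmeas : ∀ i : ℤ, Measurable (fun p : (ℤ → ℤ) × (ℤ → ℤ) => h1 (p.2 i)) := by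
      intro i
      exact (measurable_from_top (f := h1)).comp
        ((measurable_pi_apply i).comp measurable_snd)
    exact myCheb μ (fun i p => h1 (p.2 i)) m₁ 1 le_rfl hmeas
      (fun i ω => h1_abs _) (fun i => mean_Wm1 hm₁ hy1 i)
      (fun i j hL => cov_Wm1 hm₁ hind hy1 i j hL) δ hδ
  have hsub : ∀ N : ℕ,
      {p | ∃ t ≤ T,
          |m0Avg N (kacPhi^[t] p) - (PhiMap^[t] (m₀, m₁)).1| > δ ∨
          |m1Avg N (kacPhi^[t] p) - (PhiMap^[t] (m₀, m₁)).2| > δ}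
        ⊆ Goodᶜ ∪ ⋃ t ∈ Finset.range (T + 1), (A t N ∪ B N) := by
    intro N p hp
    by_cases hg : p ∈ Good
    · right
      obtain ⟨t, htT, hor⟩ := hp
      refine Set.mem_biUnion (x := t) (Finset.mem_range.mpr (by omega)) ?_
      rcases hor with h | h
      · left
        rw [good_m0 hg N t, phiMap_iter] at h
        exact h
      · right
        rw [good_m1 hg N t, phiMap_iter] at h
        exact h
    · exact Or.inl hg
  have hbound : ∀ N : ℕ,
      μ {p | ∃ t ≤ T,
          |m0Avg N (kacPhi^[t] p) - (PhiMap^[t] (m₀, m₁)).1| > δ ∨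
          |m1Avg N (kacPhi^[t] p) - (PhiMap^[t] (m₀, m₁)).2| > δ}
        ≤ ∑ t ∈ Finset.range (T + 1), (μ (A t N) + μ (B N)) := by
    intro N
    calc μ {p | ∃ t ≤ T,
          |m0Avg N (kacPhi^[t] p) - (PhiMap^[t] (m₀, m₁)).1| > δ ∨
          |m1Avg N (kacPhi^[t] p) - (PhiMap^[t] (m₀, m₁)).2| > δ}
        ≤ μ (Goodᶜ ∪ ⋃ t ∈ Finset.range (T + 1), (A t N ∪ B N)) :=
          measure_mono (hsub N)
      _ ≤ μ (Goodᶜ) + μ (⋃ t ∈ Finset.range (T + 1), (A t N ∪ B N)) :=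
          measure_union_le _ _
      _ = μ (⋃ t ∈ Finset.range (T + 1), (A t N ∪ B N)) := by
          rw [good_compl_null μ hm₀ hm₁ hx1 hx0 hy1 hy0, zero_add]
      _ ≤ ∑ t ∈ Finset.range (T + 1), μ (A t N ∪ B N) :=
          measure_biUnion_finset_le _ _
      _ ≤ ∑ t ∈ Finset.range (T + 1), (μ (A t N) + μ (B N)) :=
          Finset.sum_le_sum (fun t _ => measure_union_le _ _)
  have hsum : Tendsto (fun N => ∑ t ∈ Finset.range (T + 1), (μ (A t N) + μ (B N)))
      atTop (nhds 0) := by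
    have h0 := tendsto_finset_sum (Finset.range (T + 1))
      (fun t (_ : t ∈ Finset.range (T + 1)) => (hAm t).add hBm)
    simpa using h0
  exact tendsto_of_tendsto_of_tendsto_of_le_of_le tendsto_const_nhds hsum
    (fun N => zero_le) hbound
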